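/- The following three subsets of ℝ² are equal: (1) 𝒳 = {(a + b^{−1} + a^{−1}b, a^{−1} + b + ab^{−1}) : a, b ∈ ℝ, a > 0, b > 0}; (2) the set of (x,y) ∈ ℝ² such that Q_λ(x,y) ≥ 0 for all λ ∈ ℕ₀²; (3) the set of (x,y) ∈ ℝ² such that Q_λ(x,y) > 0 for all λ ∈ ℕ₀². -/

import Mathlib

open MvPolynomial

noncomputable section

abbrev Rxy : Type := MvPolynomial (Fin 2) ℤ

/-- Defining properties of the SU(3) character polynomials `Q a b`
(with the convention `Q a b = 0` whenever `(a, b) ∉ ℕ₀²`). -/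
def IsQSU3 (Q : ℤ → ℤ → Rxy) : Prop :=
  (∀ a b : ℤ, (a < 0 ∨ b < 0) → Q a b = 0) ∧
  Q 0 0 = 1 ∧
  Q 1 0 = X 0 ∧
  (∀ a b : ℤ, 0 ≤ a → 0 ≤ b →
    X 0 * Q a b = Q (a + 1) b + Q a (b - 1) + Q (a - 1) (b + 1)) ∧
  (∀ a b : ℤ, rename (Equiv.swap (0 : Fin 2) 1) (Q a b) = Q b a)

open Real

def EE {R : Type*} [CommRing R] (m n : ℕ) (u v w : R) : R :=
  u^m*v^n + v^m*w^n + w^m*u^n - (u^m*w^n + v^m*u^n + w^m*v^n)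

lemma EE_mm {R : Type*} [CommRing R] (m : ℕ) (u v w : R) : EE m m u v w = 0 := by
  simp only [EE]; ring

lemma EE_m0 {R : Type*} [CommRing R] (m : ℕ) (u v w : R) : EE m 0 u v w = 0 := by
  simp only [EE]; ring

lemma EE_rec {R : Type*} [CommRing R] (a b : ℕ) (u v w : R) (h : u*v*w = 1) :
    (u+v+w) * EE (a+2) (b+1) u v w
      = EE (a+3) (b+1) u v w + EE (a+2) (b+2) u v w + EE (a+1) b u v w := by
  have : (u+v+w) * EE (a+2) (b+1) u v w
      = EE (a+3) (b+1) u v w + EE (a+2) (b+2) u v w + (u*v*w) * EE (a+1) b u v w := by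
    simp only [EE]; ring
  rw [this, h, one_mul]

lemma EE_inv {R : Type*} [CommRing R] (c : ℕ) (u v w : R) (h : u*v*w = 1) :
    EE (c+2) 1 (v*w) (u*w) (u*v) = - EE (c+2) (c+1) u v w := by
  have : EE (c+2) 1 (v*w) (u*w) (u*v) = (u*v*w) * (- EE (c+2) (c+1) u v w) := by
    simp only [EE]; ring
  rw [this, h, one_mul]

lemma aeval_swap {R : Type*} [CommRing R] (x y : R) (p : Rxy) :
    aeval ![x, y] (rename (Equiv.swap (0:Fin 2) 1) p) = aeval ![y, x] p := by
  rw [aeval_rename]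
  have : (![x,y] ∘ (Equiv.swap (0:Fin 2) 1)) = ![y,x] := by
    funext i; fin_cases i <;> simp
  rw [this]


open Real

/-- real-exponent version -/
def gv (p : Fin 5 → ℝ) : ℝ :=
  p 0 ^ p 3 * p 1 ^ p 4 + p 1 ^ p 3 * p 2 ^ p 4 + p 2 ^ p 3 * p 0 ^ p 4
    - (p 0 ^ p 3 * p 2 ^ p 4 + p 1 ^ p 3 * p 0 ^ p 4 + p 2 ^ p 3 * p 1 ^ p 4)

def Sdom : Set (Fin 5 → ℝ) :=
  {p | 0 < p 2 ∧ p 2 < p 1 ∧ p 1 < p 0 ∧ 0 < p 4 ∧ p 4 < p 3}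

lemma combo_pos {a b x y : ℝ} (ha : 0 ≤ a) (hb : 0 ≤ b) (hab : a + b = 1)
    (hx : 0 < x) (hy : 0 < y) : 0 < a*x + b*y := by
  rcases eq_or_lt_of_le ha with h | h
  · rw [← h] at hab ⊢; simp at hab ⊢; nlinarith
  · nlinarith [mul_nonneg hb hy.le, mul_pos h hx]

lemma Sdom_convex : Convex ℝ Sdom := by
  intro p hp q hq a b ha hb hab
  obtain ⟨h1, h2, h3, h4, h5⟩ := hp
  obtain ⟨g1, g2, g3, g4, g5⟩ := hq
  refine ⟨?_, ?_, ?_, ?_, ?_⟩ <;> simp only [Pi.add_apply, Pi.smul_apply, smul_eq_mul]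
  · exact combo_pos ha hb hab h1 g1
  · nlinarith [combo_pos ha hb hab (by linarith : (0:ℝ) < p 1 - p 2) (by linarith : (0:ℝ) < q 1 - q 2)]
  · nlinarith [combo_pos ha hb hab (by linarith : (0:ℝ) < p 0 - p 1) (by linarith : (0:ℝ) < q 0 - q 1)]
  · exact combo_pos ha hb hab h4 g4
  · nlinarith [combo_pos ha hb hab (by linarith : (0:ℝ) < p 3 - p 4) (by linarith : (0:ℝ) < q 3 - q 4)]

lemma gv_continuousOn : ContinuousOn gv Sdom := by
  have t : ∀ (i e : Fin 5), (∀ p ∈ Sdom, p i ≠ 0) →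
      ContinuousOn (fun p : Fin 5 → ℝ => p i ^ p e) Sdom := fun i e hne =>
    ContinuousOn.rpow (continuous_apply i).continuousOn
      (continuous_apply e).continuousOn (fun p hp => Or.inl (hne p hp))
  have h0 : ∀ p ∈ Sdom, p 0 ≠ 0 := fun p hp => by
    have := hp.1; have := hp.2.1; have := hp.2.2.1; intro h; linarith [h ▸ hp.2.2.1]
  have h1 : ∀ p ∈ Sdom, p 1 ≠ 0 := fun p hp => by
    have := hp.1; have := hp.2.1; intro h; nlinarith [hp.2.1, hp.1]
  have h2 : ∀ p ∈ Sdom, p 2 ≠ 0 := fun p hp => ne_of_gt hp.1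
  unfold gv
  exact ((((t 0 3 h0).mul (t 1 4 h1)).add (((t 1 3 h1).mul (t 2 4 h2)).add
    ((t 2 3 h2).mul (t 0 4 h0)))).sub
    (((t 0 3 h0).mul (t 2 4 h2)).add (((t 1 3 h1).mul (t 0 4 h0)).add
    ((t 2 3 h2).mul (t 1 4 h1))))).congr (fun p _ => by simp only [Pi.add_apply, Pi.mul_apply, Pi.sub_apply]; ring)

lemma gv_ne_zero : ∀ p ∈ Sdom, gv p ≠ 0 := by
  rintro p ⟨h1, h2, h3, h4, h5⟩ h0
  set α := p 0 with hα
  set β := p 1 with hβ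
  set γ := p 2 with hγ
  set m := p 3 with hm
  set n := p 4 with hn
  have hαpos : 0 < α := by linarith
  have hβpos : 0 < β := by linarith
  have hdet : (Matrix.of ![![α^m, α^n, 1],![β^m, β^n, 1],![γ^m, γ^n, 1]]).det = 0 := by
    rw [Matrix.det_fin_three]
    simp only [Matrix.of_apply, Matrix.cons_val', Matrix.cons_val_zero, Matrix.cons_val_one,
      Matrix.head_cons, Matrix.empty_val', Matrix.cons_val_fin_one, Matrix.head_fin_const,
      Matrix.cons_val_two, Matrix.tail_cons]
    rw [← h0]; unfold gv
    rw [← hα, ← hβ, ← hγ, ← hm, ← hn]; ring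
  obtain ⟨c, hc0, hMc⟩ := (Matrix.exists_mulVec_eq_zero_iff).2 hdet
  have hgα : α^m * c 0 + α^n * c 1 + c 2 = 0 := by
    have := congrFun hMc 0
    simpa [Matrix.mulVec, dotProduct, Fin.sum_univ_three, Matrix.vecHead, Matrix.vecTail] using this
  have hgβ : β^m * c 0 + β^n * c 1 + c 2 = 0 := by
    have := congrFun hMc 1
    simpa [Matrix.mulVec, dotProduct, Fin.sum_univ_three, Matrix.vecHead, Matrix.vecTail] using this
  have hgγ : γ^m * c 0 + γ^n * c 1 + c 2 = 0 := by
    have := congrFun hMc 2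
    simpa [Matrix.mulVec, dotProduct, Fin.sum_univ_three, Matrix.vecHead, Matrix.vecTail] using this
  -- Rolle
  have hderiv : ∀ x : ℝ, 0 < x → HasDerivAt (fun t : ℝ => t^m * c 0 + t^n * c 1 + c 2)
      ((m * x^(m-1)) * c 0 + (n * x^(n-1)) * c 1) x := by
    intro x hx
    exact (((Real.hasDerivAt_rpow_const (Or.inl (ne_of_gt hx))).mul_const (c 0)).add
      ((Real.hasDerivAt_rpow_const (Or.inl (ne_of_gt hx))).mul_const (c 1))).add_const (c 2)
  have hcont : ∀ a b : ℝ, 0 < a → ContinuousOn (fun t : ℝ => t^m * c 0 + t^n * c 1 + c 2)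
      (Set.Icc a b) := by
    intro a b ha
    have hid : ContinuousOn (fun t : ℝ => t) (Set.Icc a b) := continuousOn_id
    have hne : ∀ t ∈ Set.Icc a b, t ≠ 0 := fun t ht => by
      have := ht.1; intro h; rw [h] at this; linarith
    exact (((hid.rpow_const (fun t ht => Or.inl (hne t ht))).mul continuousOn_const).add
      ((hid.rpow_const (fun t ht => Or.inl (hne t ht))).mul continuousOn_const)).add
      continuousOn_const
  obtain ⟨ξ1, hξ1, hd1⟩ := exists_hasDerivAt_eq_zero h2 (hcont γ β h1)
    (hgγ.trans hgβ.symm) (fun x hx => hderiv x (by have := hx.1; linarith))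
  obtain ⟨ξ2, hξ2, hd2⟩ := exists_hasDerivAt_eq_zero h3 (hcont β α hβpos)
    (hgβ.trans hgα.symm) (fun x hx => hderiv x (by have := hx.1; linarith))
  have hξ1pos : 0 < ξ1 := lt_trans h1 hξ1.1
  have hξ2pos : 0 < ξ2 := lt_trans hβpos hξ2.1
  have key : ∀ ξ : ℝ, 0 < ξ → (m * ξ^(m-1)) * c 0 + (n * ξ^(n-1)) * c 1 = 0 →
      c 0 * m * ξ^(m-n) + c 1 * n = 0 := by
    intro ξ hξ h
    have h2' := congrArg (· * ξ^(1-n)) h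
    simp only [zero_mul] at h2'
    have r1 : ξ^(m-1) * ξ^(1-n) = ξ^(m-n) := by
      rw [← Real.rpow_add hξ]; ring_nf
    have r2 : ξ^(n-1) * ξ^(1-n) = 1 := by
      rw [← Real.rpow_add hξ]; norm_num
    linear_combination h2' - (c 0 * m) * r1 - (c 1 * n) * r2
  have e1 := key ξ1 hξ1pos hd1
  have e2 := key ξ2 hξ2pos hd2
  have hmn : 0 < m - n := by linarith
  have hlt : ξ1^(m-n) < ξ2^(m-n) :=
    Real.rpow_lt_rpow (le_of_lt hξ1pos) (lt_trans hξ1.2 hξ2.1) hmn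
  have hc00 : c 0 = 0 := by
    by_contra hne
    have : c 0 * m * (ξ1^(m-n) - ξ2^(m-n)) = 0 := by linarith
    rcases mul_eq_zero.1 this with h | h
    · rcases mul_eq_zero.1 h with h' | h'
      · exact hne h'
      · linarith
    · linarith
  have hc10 : c 1 = 0 := by
    rw [hc00] at e1
    have hn0 : n ≠ 0 := by linarith
    simpa [hn0] using e1
  have hc20 : c 2 = 0 := by
    rw [hc00, hc10] at hgα; simpa using hgα
  apply hc0
  funext i
  fin_cases i <;> simp [hc00, hc10, hc20]

lemma gv_pos : ∀ p ∈ Sdom, 0 < gv p := by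
  intro p hp
  by_contra hle
  push_neg at hle
  have hlt : gv p < 0 := lt_of_le_of_ne hle (gv_ne_zero p hp)
  have hp0 : (![4,2,1,2,1] : Fin 5 → ℝ) ∈ Sdom := by
    refine ⟨?_, ?_, ?_, ?_, ?_⟩ <;> norm_num [Sdom, Matrix.cons_val_two, Matrix.cons_val_three,
      Matrix.cons_val_four, Matrix.tail_cons, Matrix.head_cons]
  have hval : gv ![4,2,1,2,1] = 6 := by
    have h2 : ∀ x : ℝ, 0 ≤ x → x ^ (2:ℝ) = x * x := by
      intro x hx
      rw [show (2:ℝ) = ((2:ℕ):ℝ) by norm_num, Real.rpow_natCast]; ring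
    simp only [gv, Matrix.cons_val_zero, Matrix.cons_val_one, Matrix.head_cons,
      Matrix.cons_val_two, Matrix.tail_cons, Matrix.cons_val_three, Matrix.cons_val_four]
    rw [h2 4 (by norm_num), h2 2 (by norm_num), h2 1 (by norm_num)]
    norm_num
  have himg := (Sdom_convex.isPreconnected).intermediate_value hp hp0 gv_continuousOn
  have h0mem : (0:ℝ) ∈ Set.Icc (gv p) (gv ![4,2,1,2,1]) := by
    rw [hval]; exact ⟨le_of_lt hlt, by norm_num⟩
  obtain ⟨q, hq, hq0⟩ := himg h0mem
  exact gv_ne_zero q hq hq0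

lemma EE_sorted_pos (m n : ℕ) (hn : 1 ≤ n) (hnm : n < m) {a b c : ℝ}
    (hc : 0 < c) (hcb : c < b) (hba : b < a) : 0 < EE m n a b c := by
  have : EE m n a b c = gv ![a,b,c,(m:ℝ),(n:ℝ)] := by
    simp only [gv, EE, Matrix.cons_val_zero, Matrix.cons_val_one, Matrix.head_cons,
      Matrix.cons_val_two, Matrix.tail_cons, Matrix.cons_val_three, Matrix.cons_val_four,
      Real.rpow_natCast]
  rw [this]
  apply gv_pos
  refine ⟨by simpa using hc, by simpa using hcb, by simpa using hba, ?_, ?_⟩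
  · simp only [Matrix.cons_val_four, Matrix.cons_val_three, Matrix.tail_cons, Matrix.head_cons]
    exact_mod_cast Nat.lt_of_lt_of_le Nat.zero_lt_one hn
  · simp only [Matrix.cons_val_four, Matrix.cons_val_three, Matrix.tail_cons, Matrix.head_cons]
    exact_mod_cast hnm

lemma EE_swap1 {R : Type*} [CommRing R] (m n : ℕ) (u v w : R) :
    EE m n u v w * EE 2 1 u v w = EE m n v u w * EE 2 1 v u w := by
  simp only [EE]; ring

lemma EE_swap2 {R : Type*} [CommRing R] (m n : ℕ) (u v w : R) :
    EE m n u v w * EE 2 1 u v w = EE m n u w v * EE 2 1 u w v := by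
  simp only [EE]; ring

lemma EE_prod_pos (m n : ℕ) (hn : 1 ≤ n) (hnm : n < m) {u v w : ℝ}
    (hu : 0 < u) (hv : 0 < v) (hw : 0 < w) (huv : u ≠ v) (huw : u ≠ w) (hvw : v ≠ w) :
    0 < EE m n u v w * EE 2 1 u v w := by
  have sorted : ∀ a b c : ℝ, 0 < c → c < b → b < a → 0 < EE m n a b c * EE 2 1 a b c :=
    fun a b c hc hcb hba =>
      mul_pos (EE_sorted_pos m n hn hnm hc hcb hba)
        (EE_sorted_pos 2 1 le_rfl one_lt_two hc hcb hba)
  rcases lt_or_gt_of_ne huv with h1 | h1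
  · rcases lt_or_gt_of_ne hvw with h2 | h2
    · -- u < v < w : sorted w v u
      rw [EE_swap1, EE_swap2, EE_swap1]
      exact sorted w v u hu h1 h2
    · rcases lt_or_gt_of_ne huw with h3 | h3
      · -- u < w < v : sorted v w u
        rw [EE_swap1, EE_swap2]
        exact sorted v w u hu h3 h2
      · -- w < u < v : sorted v u w
        rw [EE_swap1]
        exact sorted v u w hw h3 h1
  · rcases lt_or_gt_of_ne huw with h3 | h3
    · -- v < u < w : sorted w u v
      rw [EE_swap2, EE_swap1]
      exact sorted w u v hv h1 h3
    · rcases lt_or_gt_of_ne hvw with h2 | h2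
      · -- v < w < u : sorted u w v
        rw [EE_swap2]
        exact sorted u w v hv h2 h3
      · -- w < v < u : sorted u v w
        exact sorted u v w hw h2 h1


section Main
variable {Q : ℤ → ℤ → Rxy} (hQ : IsQSU3 Q)
include hQ

lemma eval_rec {R : Type*} [CommRing R] (x y : R) (l1 l2 : ℕ) :
    x * aeval ![x,y] (Q l1 l2)
      = aeval ![x,y] (Q ((l1:ℤ)+1) l2) + aeval ![x,y] (Q l1 ((l2:ℤ)-1))
        + aeval ![x,y] (Q ((l1:ℤ)-1) ((l2:ℤ)+1)) := by
  have h := hQ.2.2.2.1 l1 l2 (Int.natCast_nonneg l1) (Int.natCast_nonneg l2)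
  have h2 : (aeval ![x,y] : Rxy →ₐ[ℤ] R) (X 0 * Q l1 l2)
      = (aeval ![x,y] : Rxy →ₐ[ℤ] R) (Q ((l1:ℤ)+1) l2 + Q l1 ((l2:ℤ)-1)
          + Q ((l1:ℤ)-1) ((l2:ℤ)+1)) := by rw [h]
  simpa using h2

lemma main_formula_aux {R : Type*} [CommRing R] :
    ∀ N : ℕ, ∀ u v w : R, u*v*w = 1 → ∀ l1 l2 : ℕ, l1 + l2 = N →
      aeval ![u+v+w, u*v+u*w+v*w] (Q l1 l2) * EE 2 1 u v w
        = EE (l1+l2+2) (l2+1) u v w := by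
  intro N
  induction N using Nat.strong_induction_on with
  | _ N IH =>
  have posCase : ∀ u v w : R, u*v*w = 1 → ∀ l1' l2 : ℕ, l1' + 1 + l2 = N →
      aeval ![u+v+w, u*v+u*w+v*w] (Q (l1'+1 : ℕ) l2) * EE 2 1 u v w
        = EE (l1'+1+l2+2) (l2+1) u v w := by
    intro u v w h l1' l2 hN
    set x := u+v+w with hx
    set y := u*v+u*w+v*w with hy
    have hr := eval_rec (Q := Q) hQ x y l1' l2
    have hcast1 : ((l1':ℤ)+1) = ((l1'+1 : ℕ) : ℤ) := by push_cast; ring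
    rw [hcast1] at hr
    have hIH1 : aeval ![x,y] (Q l1' l2) * EE 2 1 u v w = EE (l1'+l2+2) (l2+1) u v w :=
      IH (l1'+l2) (by omega) u v w h l1' l2 rfl
    have hrec := EE_rec (l1'+l2) l2 u v w h
    have T1 : aeval ![x,y] (Q l1' ((l2:ℤ)-1)) * EE 2 1 u v w
        = EE (l1'+l2+1) l2 u v w := by
      rcases l2 with _ | c
      · have hz : Q (l1' : ℤ) (((0:ℕ):ℤ)-1) = 0 := hQ.1 _ _ (Or.inr (by norm_num))
        rw [hz]
        simp [EE_m0]
      · have hc : (((c+1:ℕ)):ℤ) - 1 = ((c:ℕ):ℤ) := by push_cast; ring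
        rw [hc]
        have := IH (l1'+c) (by omega) u v w h l1' c rfl
        have hidx : l1'+(c+1)+1 = l1'+c+2 := by omega
        rw [hidx]
        exact this
    have T2 : aeval ![x,y] (Q ((l1':ℤ)-1) ((l2+1:ℕ))) * EE 2 1 u v w
        = EE (l1'+l2+2) (l2+2) u v w := by
      rcases Nat.eq_zero_or_pos l1' with h1 | h1
      · subst h1
        have hz : Q (((0:ℕ):ℤ)-1) ((l2+1:ℕ)) = 0 := hQ.1 _ _ (Or.inl (by norm_num))
        rw [hz]
        have hmm : EE (0+l2+2) (l2+2) u v w = 0 := by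
          have := EE_mm (l2+2) u v w
          convert this using 2
          omega
        rw [hmm]
        simp
      · obtain ⟨d, rfl⟩ : ∃ d, l1' = d+1 := ⟨l1'-1, by omega⟩
        have hc : (((d+1:ℕ)):ℤ) - 1 = ((d:ℕ):ℤ) := by push_cast; ring
        rw [hc]
        have := IH (d+(l2+1)) (by omega) u v w h d (l2+1) rfl
        have hidx : d+1+l2+2 = d+(l2+1)+2 := by omega
        rw [hidx]
        exact this
    have hidx2 : l1'+1+l2+2 = l1'+l2+3 := by omega
    rw [hidx2]
    have hc2 : ((l2:ℕ):ℤ) = ((l2:ℕ):ℤ) := rfl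
    have hcast3 : (((l2+1:ℕ)):ℤ) = ((l2:ℤ)+1) := by push_cast; ring
    rw [← hcast3] at hr
    linear_combination x * hIH1 - (EE 2 1 u v w) * hr - T1 - T2 + hrec
  rcases Nat.eq_zero_or_pos N with hN0 | hNpos
  · subst hN0
    intro u v w h l1 l2 hl
    obtain ⟨rfl, rfl⟩ : l1 = 0 ∧ l2 = 0 := by omega
    have h00 : Q ((0:ℕ):ℤ) ((0:ℕ):ℤ) = 1 := by exact_mod_cast hQ.2.1
    rw [h00]
    simp
  · intro u v w h l1 l2 hl
    rcases l1 with _ | l1'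
    · -- l1 = 0, l2 = N ≥ 1
      obtain ⟨c, rfl⟩ : ∃ c, l2 = c+1 := ⟨l2-1, by omega⟩
      have h2 : (v*w)*((u*w))*((u*v)) = 1 := by
        have : (v*w)*(u*w)*(u*v) = (u*v*w)*(u*v*w) := by ring
        rw [this, h]; ring
      have key := posCase (v*w) (u*w) (u*v) h2 c 0 (by omega)
      -- coordinates
      have e1' : v*w+u*w+u*v = u*v+u*w+v*w := by ring
      have e2' : (v*w)*(u*w)+(v*w)*(u*v)+(u*w)*(u*v) = u+v+w := by
        linear_combination (u+v+w) * h
      rw [e1', e2'] at key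
      -- symmetry
      have hsym : aeval ![u+v+w, u*v+u*w+v*w] (Q ((0:ℕ):ℤ) ((c+1:ℕ):ℤ))
          = aeval ![u*v+u*w+v*w, u+v+w] (Q ((c+1:ℕ):ℤ) ((0:ℕ):ℤ)) := by
        rw [← hQ.2.2.2.2 ((c+1:ℕ):ℤ) ((0:ℕ):ℤ), aeval_swap]
      have hE1 := EE_inv 0 u v w h
      have hE2 := EE_inv (c+1) u v w h
      have hz1 : EE (0+2) 1 (v*w) (u*w) (u*v) = EE 2 1 (v*w) (u*w) (u*v) := by norm_num
      have hz2 : EE (c+1+2) 1 (v*w) (u*w) (u*v) = EE (c+1+0+2) (0+1) (v*w) (u*w) (u*v) := by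
        norm_num
      rw [hz1] at hE1
      rw [hz2] at hE2
      have hz3 : EE (0+2) (0+1) u v w = EE 2 1 u v w := by norm_num
      rw [hz3] at hE1
      have hidx : 0+(c+1)+2 = c+1+2 := by omega
      rw [hsym, hidx]
      have goal2 : aeval ![u*v+u*w+v*w, u+v+w] (Q ((c+1:ℕ):ℤ) ((0:ℕ):ℤ))
          * EE 2 1 (v*w) (u*w) (u*v) = EE (c+1+0+2) (0+1) (v*w) (u*w) (u*v) := key
      rw [hE1, hE2] at goal2
      have hidx2 : c+1+2 = c+3 := by omega
      have hidx3 : (c+1)+1 = c+2 := by omega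
      rw [hidx2, hidx3]
      have hidx4 : c+1+0+2 = c+3 := by omega
      rw [hidx4] at goal2
      have := goal2
      -- this : P * (-EE 2 1 u v w) = - EE (c+3) (c+2) u v w
      linear_combination -this
    · exact posCase u v w h l1' l2 hl
end Main


section C
variable {Q : ℤ → ℤ → Rxy} (hQ : IsQSU3 Q)
include hQ

lemma eval_rec' {R : Type*} [CommRing R] (x y : R) (l1 l2 : ℕ) :
    x * aeval ![x,y] (Q l1 l2)
      = aeval ![x,y] (Q ((l1:ℤ)+1) l2) + aeval ![x,y] (Q l1 ((l2:ℤ)-1))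
        + aeval ![x,y] (Q ((l1:ℤ)-1) ((l2:ℤ)+1)) := by
  have h := hQ.2.2.2.1 l1 l2 (Int.natCast_nonneg l1) (Int.natCast_nonneg l2)
  have h2 : (aeval ![x,y] : Rxy →ₐ[ℤ] R) (X 0 * Q l1 l2)
      = (aeval ![x,y] : Rxy →ₐ[ℤ] R) (Q ((l1:ℤ)+1) l2 + Q l1 ((l2:ℤ)-1)
          + Q ((l1:ℤ)-1) ((l2:ℤ)+1)) := by rw [h]
  simpa using h2

lemma pos_of_nonneg (x y : ℝ) (H : ∀ l1 l2 : ℕ, 0 ≤ aeval ![x,y] (Q l1 l2)) :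
    ∀ l1 l2 : ℕ, 0 < aeval ![x,y] (Q l1 l2) := by
  have step : ∀ a b : ℕ, aeval ![x,y] (Q a b) = 0 →
      (∀ c : ℕ, b = c + 1 → aeval ![x,y] (Q a c) = 0) ∧
      (∀ d : ℕ, a = d + 1 → aeval ![x,y] (Q d (b+1 : ℕ)) = 0) := by
    intro a b h0
    have hr := eval_rec' hQ x y a b
    rw [h0, mul_zero] at hr
    have h1 : (0:ℝ) ≤ aeval ![x,y] (Q ((a:ℤ)+1) b) := by
      have : ((a:ℤ)+1) = ((a+1:ℕ):ℤ) := by push_cast; ring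
      rw [this]; exact H (a+1) b
    have h2 : (0:ℝ) ≤ aeval ![x,y] (Q a ((b:ℤ)-1)) := by
      rcases b with _ | c
      · have hz : Q (a:ℤ) (((0:ℕ):ℤ)-1) = 0 := hQ.1 _ _ (Or.inr (by norm_num))
        rw [hz]; simp
      · have : ((c+1:ℕ):ℤ)-1 = ((c:ℕ):ℤ) := by push_cast; ring
        rw [this]; exact H a c
    have h3 : (0:ℝ) ≤ aeval ![x,y] (Q ((a:ℤ)-1) ((b:ℤ)+1)) := by
      rcases a with _ | d
      · have hz : Q (((0:ℕ):ℤ)-1) ((b:ℤ)+1) = 0 := hQ.1 _ _ (Or.inl (by norm_num))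
        rw [hz]; simp
      · have h4 : ((d+1:ℕ):ℤ)-1 = ((d:ℕ):ℤ) := by push_cast; ring
        have h5 : ((b:ℤ)+1) = ((b+1:ℕ):ℤ) := by push_cast; ring
        rw [h4, h5]; exact H d (b+1)
    constructor
    · rintro c rfl
      have : ((c+1:ℕ):ℤ)-1 = ((c:ℕ):ℤ) := by push_cast; ring
      rw [this] at hr h2
      linarith
    · rintro d rfl
      have h4 : ((d+1:ℕ):ℤ)-1 = ((d:ℕ):ℤ) := by push_cast; ring
      have h5 : ((b:ℤ)+1) = ((b+1:ℕ):ℤ) := by push_cast; ring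
      rw [h4, h5] at hr h3
      linarith
  have Z : ∀ N : ℕ, ∀ l1 l2 : ℕ, l1 + l2 = N →
      aeval ![x,y] (Q l1 l2) = 0 → False := by
    intro N
    induction N using Nat.strong_induction_on with
    | _ N IH =>
    intro l1 l2 hN h0
    rcases l2 with _ | c
    · rcases l1 with _ | d
      · have h00 : Q ((0:ℕ):ℤ) ((0:ℕ):ℤ) = 1 := by exact_mod_cast hQ.2.1
        rw [h00] at h0
        simp at h0
      · have z1 := (step (d+1) 0 h0).2 d rfl
        have z2 := (step d 1 z1).1 0 rfl
        exact IH d (by omega) d 0 rfl z2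
    · have z1 := (step l1 (c+1) h0).1 c rfl
      exact IH (l1+c) (by omega) l1 c rfl z1
  intro l1 l2
  rcases lt_or_eq_of_le (H l1 l2) with h | h
  · exact h
  · exact absurd h.symm (fun h0 => (Z (l1+l2) l1 l2 rfl h0).elim)
end C


section PartA
variable {Q : ℤ → ℤ → Rxy} (hQ : IsQSU3 Q)

lemma cont_aeval (q : Rxy) : Continuous fun s : ℝ × ℝ => aeval ![s.1, s.2] q := by
  induction q using MvPolynomial.induction_on with
  | C a => simpa using continuous_const
  | add p r hp hr => simpa only [map_add] using hp.fun_add hr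
  | mul_X p i hp =>
    simp only [map_mul, aeval_X]
    fin_cases i
    · simpa using hp.fun_mul continuous_fst
    · simpa using hp.fun_mul continuous_snd

include hQ

lemma main_formula {R : Type*} [CommRing R] (u v w : R) (h : u*v*w = 1) (l1 l2 : ℕ) :
    aeval ![u+v+w, u*v+u*w+v*w] (Q l1 l2) * EE 2 1 u v w = EE (l1+l2+2) (l2+1) u v w :=
  main_formula_aux hQ (l1+l2) u v w h l1 l2 rfl

lemma partA (a b : ℝ) (ha : 0 < a) (hb : 0 < b) (l1 l2 : ℕ) :
    0 ≤ aeval ![a + b⁻¹ + a⁻¹ * b, a⁻¹ + b + a * b⁻¹] (Q l1 l2) := by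
  have hb' : b ≠ 0 := ne_of_gt hb
  have key : ∀ t : ℝ, 0 < t → t ≠ b⁻¹ → t ≠ Real.sqrt b → t ≠ b^2 →
      0 < aeval ![t + b⁻¹ + t⁻¹ * b, t⁻¹ + b + t * b⁻¹] (Q l1 l2) := by
    intro t ht h1 h2 h3
    have ht' : t ≠ 0 := ne_of_gt ht
    have hprod : t * b⁻¹ * (t⁻¹ * b) = 1 := by field_simp
    have hf := main_formula hQ t b⁻¹ (t⁻¹*b) hprod l1 l2
    have he2 : t*b⁻¹ + t*(t⁻¹*b) + b⁻¹*(t⁻¹*b) = t⁻¹ + b + t*b⁻¹ := by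
      field_simp; ring
    rw [he2] at hf
    have d2 : t ≠ t⁻¹*b := by
      intro h
      apply h2
      have htt : t^2 = b := by
        have := congrArg (· * t) h
        field_simp at this
        nlinarith [this]
      rw [← htt, Real.sqrt_sq (le_of_lt ht)]
    have d3 : b⁻¹ ≠ t⁻¹*b := by
      intro h
      apply h3
      field_simp at h
      nlinarith [h]
    have hEpos := EE_prod_pos (l1+l2+2) (l2+1) (by omega) (by omega) ht
      (inv_pos.2 hb) (mul_pos (inv_pos.2 ht) hb) h1 d2 d3
    by_contra hle
    push_neg at hle
    set P := aeval ![t + b⁻¹ + t⁻¹ * b, t⁻¹ + b + t * b⁻¹] (Q (l1:ℤ) (l2:ℤ)) with hP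
    set E := EE 2 1 t b⁻¹ (t⁻¹*b) with hE
    set M := EE (l1+l2+2) (l2+1) t b⁻¹ (t⁻¹*b) with hM
    have h5 : P * E * E = M * E := by rw [hf]
    have h6 : P * (E * E) ≤ 0 := mul_nonpos_of_nonpos_of_nonneg hle (mul_self_nonneg E)
    nlinarith [hEpos, h5, h6]
  set s : ℕ → ℝ := fun k => a + ((k:ℝ)+1)⁻¹ with hsdef
  have hs : Filter.Tendsto s Filter.atTop (nhds a) := by
    have h0 := tendsto_one_div_add_atTop_nhds_zero_nat (𝕜 := ℝ)
    have h1 : Filter.Tendsto (fun k : ℕ => a + 1/((k:ℝ)+1) : ℕ → ℝ) Filter.atTop (nhds (a+0)) :=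
      Filter.Tendsto.add tendsto_const_nhds h0
    simpa [one_div] using h1
  have hinj : Function.Injective s := by
    intro k l hkl
    have h1 : ((k:ℝ)+1)⁻¹ = ((l:ℝ)+1)⁻¹ := by
      have h := hkl
      simp only [hsdef, add_right_inj] at h
      exact h
    have h2 : ((k:ℝ)+1) = ((l:ℝ)+1) := inv_inj.mp h1
    have h3 : (k:ℝ) = l := by linarith
    exact_mod_cast h3
  have hev : ∀ c : ℝ, ∀ᶠ k in Filter.atTop, s k ≠ c := by
    intro c
    have hfin : {k : ℕ | s k = c}.Finite :=
      Set.Subsingleton.finite (fun k hk l hl => hinj (hk.trans hl.symm))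
    have h2 := hfin.eventually_cofinite_notMem
    rw [Nat.cofinite_eq_atTop] at h2
    exact h2.mono (fun k hk => hk)
  have hspos : ∀ k : ℕ, 0 < s k := by
    intro k
    have h4 : (0:ℝ) < ((k:ℝ)+1)⁻¹ := by positivity
    simp only [hsdef]; linarith
  have hsinv : Filter.Tendsto (fun k => (s k)⁻¹) Filter.atTop (nhds a⁻¹) :=
    hs.inv₀ (ne_of_gt ha)
  have hpair : Filter.Tendsto
      (fun k => (s k + b⁻¹ + (s k)⁻¹ * b, (s k)⁻¹ + b + s k * b⁻¹)) Filter.atTop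
      (nhds (a + b⁻¹ + a⁻¹ * b, a⁻¹ + b + a * b⁻¹)) := by
    apply Filter.Tendsto.prodMk_nhds
    · exact (hs.add tendsto_const_nhds).add (hsinv.mul tendsto_const_nhds)
    · exact (hsinv.add tendsto_const_nhds).add (hs.mul tendsto_const_nhds)
  have htend : Filter.Tendsto
      (fun k => aeval ![s k + b⁻¹ + (s k)⁻¹ * b, (s k)⁻¹ + b + s k * b⁻¹] (Q (l1:ℤ) (l2:ℤ)))
      Filter.atTop (nhds (aeval ![a + b⁻¹ + a⁻¹ * b, a⁻¹ + b + a * b⁻¹] (Q (l1:ℤ) (l2:ℤ)))) := by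
    have h2 := ((cont_aeval (Q l1 l2)).tendsto (a + b⁻¹ + a⁻¹ * b, a⁻¹ + b + a * b⁻¹)).comp hpair
    simpa [Function.comp_def] using h2
  have hpos : ∀ᶠ k in Filter.atTop,
      0 ≤ aeval ![s k + b⁻¹ + (s k)⁻¹ * b, (s k)⁻¹ + b + s k * b⁻¹] (Q (l1:ℤ) (l2:ℤ)) := by
    filter_upwards [hev b⁻¹, hev (Real.sqrt b), hev (b^2)] with k h1 h2 h3
    exact le_of_lt (key (s k) (hspos k) h1 h2 h3)
  exact ge_of_tendsto htend hpos
end PartA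

section Walk
open Real

lemma walk_lemma (θ ψ c : ℝ) (hθ : 0 < θ) (M : ℕ) :
    ∃ m : ℕ, M ≤ m ∧ ∃ k : ℤ, c + 2*π*k < m*θ + ψ ∧ m*θ + ψ ≤ c + 2*π*k + θ := by
  have hπ := Real.pi_pos
  set k : ℤ := ⌈(M*θ + ψ - c)/(2*π)⌉ with hkdef
  have hk : M*θ + ψ ≤ c + 2*π*k := by
    have h1 : (M*θ + ψ - c)/(2*π) ≤ (k:ℝ) := Int.le_ceil _
    have h2 : M*θ + ψ - c ≤ 2*π*k := by
      have h3 := mul_le_mul_of_nonneg_left h1 (by linarith : (0:ℝ) ≤ 2*π)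
      calc M*θ + ψ - c = 2*π*((M*θ + ψ - c)/(2*π)) := by field_simp
        _ ≤ 2*π*k := h3
    linarith
  set T : ℝ := c + 2*π*k with hTdef
  set j : ℤ := ⌊(T - ψ)/θ⌋ with hjdef
  have hjM : (M:ℤ) ≤ j := by
    apply Int.le_floor.2
    rw [Int.cast_natCast]
    exact (le_div_iff₀ hθ).2 (by linarith)
  have hjnn : 0 ≤ j + 1 := by omega
  set m : ℕ := (j+1).toNat with hmdef
  have hm1 : (m:ℤ) = j+1 := Int.toNat_of_nonneg hjnn
  have hm2 : ((m:ℝ)) = (j:ℝ)+1 := by exact_mod_cast hm1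
  refine ⟨m, by omega, k, ?_, ?_⟩
  · have h1 : (T - ψ)/θ < (j:ℝ)+1 := Int.lt_floor_add_one _
    have h2 : T - ψ < ((j:ℝ)+1)*θ := by
      have := (div_lt_iff₀ hθ).1 h1
      linarith
    rw [hm2]
    simp only [hTdef] at h2 ⊢
    linarith
  · have h1 : (j:ℝ) ≤ (T - ψ)/θ := Int.floor_le _
    have h2 : (j:ℝ)*θ ≤ T - ψ := (le_div_iff₀ hθ).1 h1
    rw [hm2]
    simp only [hTdef] at h2 ⊢
    linarith

lemma sin_lower {cp t : ℝ} (h1 : 0 < cp) (h2 : cp ≤ π/2) (h3 : cp ≤ t) (h4 : t ≤ π - cp) :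
    Real.sin cp ≤ Real.sin t := by
  have hπ := Real.pi_pos
  rcases le_total t (π/2) with h | h
  · exact Real.strictMonoOn_sin.monotoneOn ⟨by linarith, by linarith⟩ ⟨by linarith, h⟩ h3
  · rw [← Real.sin_pi_sub t]
    exact Real.strictMonoOn_sin.monotoneOn ⟨by linarith, by linarith⟩
      ⟨by linarith, by linarith⟩ (by linarith)

lemma sin_upper_neg {c' x : ℝ} (h1 : 0 < c') (h2 : c' ≤ π/2) (hx1 : π + c' ≤ x)
    (hx2 : x ≤ 2*π - c') : Real.sin x ≤ -Real.sin c' := by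
  have h := Real.sin_sub_pi x
  have h3 := sin_lower h1 h2 (by linarith : c' ≤ x - π) (by linarith : x - π ≤ π - c')
  linarith

lemma sin_period (x : ℝ) (k : ℤ) : Real.sin (x + k*(2*π)) = Real.sin x :=
  Real.sin_add_int_mul_two_pi x k

end Walk

section Cx
open Real Complex

lemma aeval_ofReal (x y : ℝ) (q : Rxy) :
    MvPolynomial.aeval ![(x:ℂ), (y:ℂ)] q = ((MvPolynomial.aeval ![x,y] q : ℝ) : ℂ) := by
  induction q using MvPolynomial.induction_on with
  | C a => simp
  | add p r hp hr => simp [hp, hr]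
  | mul_X p i hp => fin_cases i <;> simp [hp]

lemma im_mul_exp (c t : ℝ) : ((c:ℂ) * Complex.exp ((t:ℂ)*Complex.I)).im = c * Real.sin t := by
  rw [Complex.mul_im]
  simp [Complex.exp_ofReal_mul_I_re, Complex.exp_ofReal_mul_I_im]

lemma EE_m1_eq (m : ℕ) (p : ℝ) (z : ℂ) :
    EE m 1 (p:ℂ) z ((starRingEnd ℂ) z)
      = ((2 * (p^m * z.im + (z^m * ((starRingEnd ℂ) z - (p:ℂ))).im) : ℝ) : ℂ) * Complex.I := by
  have e1 : EE m 1 (p:ℂ) z ((starRingEnd ℂ) z)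
      = ((p:ℂ)^m) * (z - (starRingEnd ℂ) z)
        + ((z^m * ((starRingEnd ℂ) z - (p:ℂ)))
            - (starRingEnd ℂ) (z^m * ((starRingEnd ℂ) z - (p:ℂ)))) := by
    simp only [EE, pow_one, map_sub, map_mul, map_pow, Complex.conj_conj, Complex.conj_ofReal]
    ring
  rw [e1, Complex.sub_conj, Complex.sub_conj]
  push_cast
  ring

end Cx

section IIB
open Real
variable {Q : ℤ → ℤ → Rxy} (hQ : IsQSU3 Q)
include hQ

lemma IIB (X Y : ℝ) (H : ∀ l1 l2 : ℕ, 0 ≤ MvPolynomial.aeval ![X,Y] (Q l1 l2))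
    (p : ℝ) (z : ℂ) (him : 0 < z.im) (habs : 1 < ‖z‖)
    (hprod : (p:ℂ) * z * ((starRingEnd ℂ) z) = 1)
    (he1 : (p:ℂ) + z + (starRingEnd ℂ) z = (X:ℂ))
    (he2 : (p:ℂ)*z + (p:ℂ)*((starRingEnd ℂ) z) + z*((starRingEnd ℂ) z) = (Y:ℂ)) :
    False := by
  have hπ := Real.pi_pos
  set r := ‖z‖ with hrdef
  set θ := Complex.arg z with hθdef
  have hz0 : z ≠ 0 := fun h => by simp [h] at him
  have hr0 : 0 < r := norm_pos_iff.2 hz0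
  have hθ1 : 0 < θ := by
    have h0 : 0 ≤ θ := Complex.arg_nonneg_iff.2 him.le
    rcases eq_or_lt_of_le h0 with h | h
    · exact absurd (Complex.arg_eq_zero_iff.1 h.symm).2 (ne_of_gt him)
    · exact h
  have hθ2 : θ < π := by
    rcases eq_or_lt_of_le (Complex.arg_le_pi z) with h | h
    · exact absurd (Complex.arg_eq_pi_iff.1 h).2 (ne_of_gt him)
    · exact h
  have hsinθ : 0 < Real.sin θ := Real.sin_pos_of_pos_of_lt_pi hθ1 hθ2
  have hnsq : Complex.normSq z = r*r := by rw [Complex.normSq_eq_norm_sq]; ring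
  have hp1 : p * (r*r) = 1 := by
    have h1 : ((p * (r*r) : ℝ) : ℂ) = 1 := by
      rw [← hprod, mul_assoc, Complex.mul_conj, hnsq]
      push_cast
      ring
    exact_mod_cast h1
  have hppos : 0 < p := by nlinarith [mul_pos hr0 hr0]
  have hpr : p < r := by nlinarith [mul_pos hr0 hr0, mul_pos hppos hr0]
  set ζ := (starRingEnd ℂ) z - (p:ℂ) with hζdef
  have hζim : ζ.im = -z.im := by
    simp [hζdef, Complex.sub_im, Complex.conj_im, Complex.ofReal_im]
  have hζ0 : ζ ≠ 0 := fun h => by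
    have := congrArg Complex.im h
    simp [hζim] at this
    linarith
  set R := ‖ζ‖ with hRdef
  set ψ := Complex.arg ζ with hψdef
  have hR : 0 < R := norm_pos_iff.2 hζ0
  have hzim : z.im = r * Real.sin θ := by
    conv_lhs => rw [← Complex.norm_mul_exp_arg_mul_I z]
    rw [← hrdef, ← hθdef]
    exact im_mul_exp r θ
  have him2 : ∀ m : ℕ, (z^m * ζ).im = r^m * R * Real.sin (m*θ + ψ) := by
    intro m
    have harg : (m:ℂ)*((θ:ℂ)*Complex.I) + (ψ:ℂ)*Complex.I = ((m*θ+ψ:ℝ):ℂ)*Complex.I := by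
      push_cast; ring
    have h1 : z^m * ζ = ((r^m * R : ℝ):ℂ) * Complex.exp (((m*θ + ψ : ℝ):ℂ) * Complex.I) := by
      conv_lhs => rw [← Complex.norm_mul_exp_arg_mul_I z, ← Complex.norm_mul_exp_arg_mul_I ζ]
      rw [← hrdef, ← hθdef, ← hRdef, ← hψdef, mul_pow, ← Complex.exp_nat_mul,
        mul_mul_mul_comm, ← Complex.exp_add, harg]
      push_cast
      ring
    rw [h1, im_mul_exp]
  have key : ∀ l : ℕ, 0 ≤ p^(l+2) * z.im + (z^(l+2) * ζ).im := by
    intro l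
    have hf := main_formula hQ (p:ℂ) z ((starRingEnd ℂ) z) hprod l 0
    rw [he1, he2, aeval_ofReal] at hf
    have hEm := EE_m1_eq (l+0+2) p z
    have hE2 := EE_m1_eq 2 p z
    rw [hEm, hE2] at hf
    set P : ℝ := MvPolynomial.aeval ![X,Y] (Q (l:ℤ) ((0:ℕ):ℤ)) with hPdef
    have hfre : P * (2*(p^2*z.im + (z^2*ζ).im)) = 2*(p^(l+0+2)*z.im + (z^(l+0+2)*ζ).im) := by
      have h2 : ((P * (2*(p^2*z.im + (z^2*ζ).im)) : ℝ) : ℂ)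
          = ((2*(p^(l+0+2)*z.im + (z^(l+0+2)*ζ).im) : ℝ) : ℂ) := by
        apply mul_right_cancel₀ Complex.I_ne_zero
        push_cast
        push_cast at hf
        linear_combination hf
      exact_mod_cast h2
    have hG2 : p^2*z.im + (z^2*ζ).im = z.im * ((z.re - p)^2 + z.im^2) := by
      simp only [hζdef, pow_two, Complex.mul_im, Complex.mul_re, Complex.sub_re,
        Complex.sub_im, Complex.conj_re, Complex.conj_im, Complex.ofReal_re, Complex.ofReal_im]
      ring
    have hG2pos : 0 < p^2*z.im + (z^2*ζ).im := by
      rw [hG2]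
      apply mul_pos him
      nlinarith [sq_nonneg (z.re - p), him]
    have hP0 : 0 ≤ P := H l 0
    nlinarith [mul_nonneg hP0 hG2pos.le, hfre]
  -- contradiction
  set c' := (π - θ)/4 with hc'def
  have hc'1 : 0 < c' := by simp only [hc'def]; linarith
  have hc'2 : c' ≤ π/2 := by simp only [hc'def]; linarith
  set δ := Real.sin c' with hδdef
  have hδ : 0 < δ := Real.sin_pos_of_pos_of_lt_pi hc'1 (by simp only [hc'def]; linarith)
  have hgeo : Filter.Tendsto (fun m : ℕ => (p/r)^m) Filter.atTop (nhds 0) :=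
    tendsto_pow_atTop_nhds_zero_of_lt_one (div_nonneg hppos.le hr0.le)
      ((div_lt_one hr0).2 hpr)
  obtain ⟨M, hM⟩ := Filter.eventually_atTop.1
    (hgeo.eventually (gt_mem_nhds (show (0:ℝ) < (R*δ)/(r*Real.sin θ) by positivity)))
  obtain ⟨m, hmge, k, hk1, hk2⟩ := walk_lemma θ ψ (π + c') hθ1 (max M 2)
  have hsin : Real.sin (m*θ + ψ) ≤ -δ := by
    have hx : Real.sin (m*θ+ψ) = Real.sin (m*θ+ψ - k*(2*π)) := by
      rw [← sin_period (m*θ+ψ - k*(2*π)) k]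
      ring_nf
    rw [hx]
    apply sin_upper_neg hc'1 hc'2
    · linarith [hk1]
    · have hθ2c : θ + 2*c' ≤ π := by simp only [hc'def]; linarith
      linarith [hk2]
  have hm2 : 2 ≤ m := le_trans (le_max_right M 2) hmge
  obtain ⟨l, rfl⟩ : ∃ l, m = l + 2 := ⟨m - 2, by omega⟩
  have hkey := key l
  have hsmall : (p/r)^(l+2) < (R*δ)/(r*Real.sin θ) :=
    hM (l+2) (le_trans (le_max_left M 2) hmge)
  have hrm : (0:ℝ) < r^(l+2) := pow_pos hr0 _
  have h1 : p^(l+2) * z.im < r^(l+2) * R * δ := by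
    rw [hzim]
    have h3 := mul_lt_mul_of_pos_left hsmall (mul_pos hrm (mul_pos hr0 hsinθ))
    rw [div_pow] at h3
    have e1 : r^(l+2) * (r*Real.sin θ) * (p^(l+2)/r^(l+2)) = p^(l+2) * (r*Real.sin θ) := by
      field_simp
    have e2 : r^(l+2) * (r*Real.sin θ) * ((R*δ)/(r*Real.sin θ)) = r^(l+2) * R * δ := by
      field_simp
    rw [e1, e2] at h3
    exact h3
  have h4 : r^(l+2) * R * Real.sin (((l+2:ℕ):ℝ)*θ+ψ) ≤ -(r^(l+2) * R * δ) := by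
    have h5 := mul_le_mul_of_nonneg_left hsin (le_of_lt (mul_pos hrm hR))
    calc r^(l+2) * R * Real.sin (((l+2:ℕ):ℝ)*θ+ψ)
        = (r^(l+2) * R) * Real.sin (((l+2:ℕ):ℝ)*θ+ψ) := by ring
      _ ≤ (r^(l+2)*R) * (-δ) := h5
      _ = -(r^(l+2) * R * δ) := by ring
  rw [him2 (l+2), hzim] at hkey
  rw [hzim] at h1
  linarith [hkey, h1, h4]
end IIB

section IIC
open Real
variable {Q : ℤ → ℤ → Rxy} (hQ : IsQSU3 Q)

lemma EE_2kk_eq (k : ℕ) (z : ℂ) (hmc : z * ((starRingEnd ℂ) z) = 1) :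
    EE (2*k) k 1 z ((starRingEnd ℂ) z)
      = ((2 * (2*(z^k).im - (z^(2*k)).im) : ℝ) : ℂ) * Complex.I := by
  have h1 : z^k * ((starRingEnd ℂ) z)^k = 1 := by
    rw [← mul_pow, hmc, one_pow]
  have h2k : z^(2*k) = z^k * z^k := by rw [two_mul, pow_add]
  have h2kc : ((starRingEnd ℂ) z)^(2*k) = ((starRingEnd ℂ) z)^k * ((starRingEnd ℂ) z)^k := by
    rw [two_mul, pow_add]
  have e1 : EE (2*k) k 1 z ((starRingEnd ℂ) z)
      = 2*(z^k - (starRingEnd ℂ) (z^k)) - (z^(2*k) - (starRingEnd ℂ) (z^(2*k))) := by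
    simp only [EE, one_pow, h2k, h2kc, map_mul, map_pow]
    linear_combination (z^k - ((starRingEnd ℂ) z)^k) * h1
  rw [e1, Complex.sub_conj, Complex.sub_conj]
  push_cast
  ring

include hQ

lemma IIC (X Y : ℝ) (H : ∀ l1 l2 : ℕ, 0 ≤ MvPolynomial.aeval ![X,Y] (Q l1 l2))
    (z : ℂ) (him : 0 < z.im) (habs : ‖z‖ = 1)
    (hprod : (1:ℂ) * z * ((starRingEnd ℂ) z) = 1)
    (he1 : (1:ℂ) + z + (starRingEnd ℂ) z = (X:ℂ))
    (he2 : (1:ℂ)*z + (1:ℂ)*((starRingEnd ℂ) z) + z*((starRingEnd ℂ) z) = (Y:ℂ)) :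
    False := by
  have hπ := Real.pi_pos
  set θ := Complex.arg z with hθdef
  have hz0 : z ≠ 0 := fun h => by simp [h] at him
  have hθ1 : 0 < θ := by
    have h0 : 0 ≤ θ := Complex.arg_nonneg_iff.2 him.le
    rcases eq_or_lt_of_le h0 with h | h
    · exact absurd (Complex.arg_eq_zero_iff.1 h.symm).2 (ne_of_gt him)
    · exact h
  have hθ2 : θ < π := by
    rcases eq_or_lt_of_le (Complex.arg_le_pi z) with h | h
    · exact absurd (Complex.arg_eq_pi_iff.1 h).2 (ne_of_gt him)
    · exact h
  have hsinθ : 0 < Real.sin θ := Real.sin_pos_of_pos_of_lt_pi hθ1 hθ2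
  have hmc : z * ((starRingEnd ℂ) z) = 1 := by
    rw [Complex.mul_conj, Complex.normSq_eq_norm_sq, habs]
    norm_num
  have hzpow : ∀ m : ℕ, (z^m).im = Real.sin (m*θ) := by
    intro m
    have h1 : z^m = ((1:ℝ):ℂ) * Complex.exp (((m*θ : ℝ):ℂ) * Complex.I) := by
      conv_lhs => rw [← Complex.norm_mul_exp_arg_mul_I z]
      rw [← hθdef, habs, mul_pow, ← Complex.exp_nat_mul]
      push_cast
      ring_nf
    rw [h1, im_mul_exp, one_mul]
  -- evaluated identity for lambda = (k-1, k-1)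
  have key : ∀ k : ℕ, 1 ≤ k →
      (MvPolynomial.aeval ![X,Y] (Q ((k-1:ℕ):ℤ) ((k-1:ℕ):ℤ)) : ℝ)
        * (2*Real.sin θ - Real.sin (2*θ)) = 2*Real.sin (k*θ) - Real.sin (2*(k*θ)) := by
    intro k hk
    have hf := main_formula hQ (1:ℂ) z ((starRingEnd ℂ) z) hprod (k-1) (k-1)
    rw [he1, he2, aeval_ofReal] at hf
    have hidx : (k-1) + (k-1) + 2 = 2*k := by omega
    have hidx2 : (k-1) + 1 = k := by omega
    rw [hidx, hidx2] at hf
    have hEm := EE_2kk_eq (k := k) z hmc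
    have hE2 : EE 2 1 (1:ℂ) z ((starRingEnd ℂ) z)
        = ((2 * (2*(z^1).im - (z^(2*1)).im) : ℝ) : ℂ) * Complex.I := by
      have := EE_2kk_eq (k := 1) z hmc
      norm_num at this ⊢
      exact this
    rw [hEm, hE2] at hf
    have h2 : ((MvPolynomial.aeval ![X,Y] (Q ((k-1:ℕ):ℤ) ((k-1:ℕ):ℤ)) : ℝ)
          * (2*(2*(z^1).im - (z^(2*1)).im)) : ℝ)
        = ((2*(2*(z^k).im - (z^(2*k)).im)) : ℝ) := by
      have h3 : (((MvPolynomial.aeval ![X,Y] (Q ((k-1:ℕ):ℤ) ((k-1:ℕ):ℤ)) : ℝ)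
          * (2*(2*(z^1).im - (z^(2*1)).im)) : ℝ) : ℂ)
          = (((2*(2*(z^k).im - (z^(2*k)).im)) : ℝ) : ℂ) := by
        apply mul_right_cancel₀ Complex.I_ne_zero
        push_cast
        push_cast at hf
        linear_combination hf
      exact_mod_cast h3
    rw [hzpow 1, hzpow (2*1), hzpow k, hzpow (2*k)] at h2
    push_cast at h2
    push_cast
    ring_nf at h2 ⊢
    linarith [h2]
  -- choose k with sin (k θ) < 0
  obtain ⟨m, hmge, k', hk1, hk2⟩ := walk_lemma θ 0 π hθ1 1
  have hsin : Real.sin (m*θ) < 0 := by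
    have hx : Real.sin (m*θ) = Real.sin (m*θ + 0 - k'*(2*π)) := by
      rw [← sin_period (m*θ + 0 - k'*(2*π)) k']
      ring_nf
    rw [hx]
    have hb1 : π < m*θ + 0 - k'*(2*π) := by linarith [hk1]
    have hb2 : m*θ + 0 - k'*(2*π) ≤ π + θ := by linarith [hk2]
    have h5 := Real.sin_sub_pi (m*θ + 0 - k'*(2*π))
    have h6 : 0 < Real.sin (m*θ + 0 - k'*(2*π) - π) :=
      Real.sin_pos_of_pos_of_lt_pi (by linarith) (by linarith)
    linarith
  have hcos1 : Real.cos θ < 1 := by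
    nlinarith [Real.sin_sq_add_cos_sq θ, Real.cos_le_one θ, hsinθ]
  have hcosm : Real.cos (m*θ) < 1 := by
    nlinarith [Real.sin_sq_add_cos_sq (m*θ), Real.cos_le_one (m*θ), hsin]
  have hm1 : 1 ≤ m := hmge
  have hkeym := key m hm1
  have hP := H (m-1) (m-1)
  have hlhs : 0 ≤ (MvPolynomial.aeval ![X,Y] (Q ((m-1:ℕ):ℤ) ((m-1:ℕ):ℤ)) : ℝ)
      * (2*Real.sin θ - Real.sin (2*θ)) := by
    apply mul_nonneg hP
    rw [Real.sin_two_mul]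
    nlinarith [hsinθ, hcos1]
  have hrhs : 2*Real.sin (m*θ) - Real.sin (2*(m*θ)) < 0 := by
    rw [Real.sin_two_mul]
    nlinarith [hsin, hcosm]
  linarith [hkeym, hlhs, hrhs]
end IIC

section PartB
open Real

lemma L2 {s t g : ℝ} (hs : 0 < s) (ht : 0 < t) (hg : 0 < g)
    (h1 : 0 ≤ g - s - t) (h2 : 0 ≤ s*t - g*s - g*t) : False := by
  nlinarith [mul_pos hs ht, sq_nonneg (s-t), mul_nonneg h1 (add_pos hs ht).le]

lemma posroot {p v w : ℝ} (hprod : p*v*w = 1) (h1 : 0 ≤ p+v+w)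
    (h2 : 0 ≤ p*v+p*w+v*w) : 0 < p := by
  rcases lt_trichotomy p 0 with hp | hp | hp
  · exfalso
    have hvw : v*w < 0 := by nlinarith
    rcases mul_neg_iff.1 hvw with ⟨hv, hw⟩ | ⟨hv, hw⟩
    · exact L2 (neg_pos.2 hp) (neg_pos.2 hw) hv (by linarith) (by nlinarith [h2])
    · exact L2 (neg_pos.2 hp) (neg_pos.2 hv) hw (by linarith) (by nlinarith [h2])
  · exfalso; rw [hp] at hprod; simp at hprod
  · exact hp

variable {Q : ℤ → ℤ → Rxy} (hQ : IsQSU3 Q)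
include hQ

set_option maxHeartbeats 1000000 in
lemma partB (X Y : ℝ) (H : ∀ l1 l2 : ℕ, 0 ≤ MvPolynomial.aeval ![X,Y] (Q l1 l2)) :
    ∃ a b : ℝ, 0 < a ∧ 0 < b ∧ X = a + b⁻¹ + a⁻¹*b ∧ Y = a⁻¹ + b + a*b⁻¹ := by
  have hX0 : 0 ≤ X := by
    have h := H 1 0
    have e : Q ((1:ℕ):ℤ) ((0:ℕ):ℤ) = MvPolynomial.X 0 := by
      have := hQ.2.2.1; exact_mod_cast this
    rw [e] at h
    simpa using h
  have hY0 : 0 ≤ Y := by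
    have h := H 0 1
    have e : Q ((0:ℕ):ℤ) ((1:ℕ):ℤ) = MvPolynomial.rename (Equiv.swap (0 : Fin 2) 1) (Q 1 0) := by
      have h2 := hQ.2.2.2.2 (1:ℤ) (0:ℤ)
      rw [h2]; norm_num
    rw [e, aeval_swap, hQ.2.2.1] at h
    simpa using h
  set f : ℝ → ℝ := fun t => t^3 - X*t^2 + Y*t - 1 with hfdef
  have hcf : Continuous f := by
    simp only [hfdef]
    continuity
  set M : ℝ := |X| + |Y| + 2 with hMdef
  have hM2 : 2 ≤ M := by
    have := abs_nonneg X; have := abs_nonneg Y; simp only [hMdef]; linarith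
  have hfM : 0 ≤ f M := by
    simp only [hfdef]
    nlinarith [sq_nonneg M, abs_nonneg X, abs_nonneg Y, le_abs_self X, neg_abs_le Y,
      mul_nonneg (abs_nonneg X) (abs_nonneg Y), sq_nonneg (M-2), hM2,
      mul_le_mul_of_nonneg_left (le_abs_self X) (mul_pos (lt_of_lt_of_le two_pos hM2)
        (lt_of_lt_of_le two_pos hM2)).le]
  have hf0 : f 0 ≤ 0 := by simp [hfdef]
  obtain ⟨p, hpmem, hproot⟩ := intermediate_value_Icc (by linarith : (0:ℝ) ≤ M)
    hcf.continuousOn (show (0:ℝ) ∈ Set.Icc (f 0) (f M) from ⟨hf0, hfM⟩)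
  have hp0ne : p ≠ 0 := by
    intro h
    rw [h] at hproot
    simp [hfdef] at hproot
  have hppos : 0 < p := lt_of_le_of_ne hpmem.1 (Ne.symm hp0ne)
  have hroot : p^3 - X*p^2 + Y*p - 1 = 0 := hproot
  have hy2 : p*(X-p) + 1/p = Y := by
    field_simp
    nlinarith [hroot]
  set D : ℝ := (X-p)^2 - 4/p with hDdef
  rcases le_or_gt 0 D with hD | hD
  · -- three real roots
    obtain ⟨v, hvdef⟩ : ∃ t : ℝ, t = ((X-p) + Real.sqrt D)/2 := ⟨_, rfl⟩
    obtain ⟨w, hwdef⟩ : ∃ t : ℝ, t = ((X-p) - Real.sqrt D)/2 := ⟨_, rfl⟩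
    have hsq : Real.sqrt D ^ 2 = D := Real.sq_sqrt hD
    have hvw : v*w = 1/p := by
      have h1 : v*w = ((X-p)^2 - Real.sqrt D^2)/4 := by rw [hvdef, hwdef]; ring
      rw [hsq, hDdef] at h1
      rw [h1]; ring
    have hsum : v + w = X - p := by rw [hvdef, hwdef]; ring
    have hprod3 : p*v*w = 1 := by
      rw [mul_assoc, hvw]; field_simp
    have he1r : p + v + w = X := by rw [add_assoc, hsum]; ring
    have he2r : p*v + p*w + v*w = Y := by
      have h2 : p*v + p*w + v*w = p*(v+w) + v*w := by ring
      rw [h2, hsum, hvw, hy2]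
    have h1X : 0 ≤ p+v+w := by rw [he1r]; exact hX0
    have h2Y : 0 ≤ p*v+p*w+v*w := by rw [he2r]; exact hY0
    have hv : 0 < v := posroot (p := v) (v := p) (w := w)
      (by linear_combination hprod3) (by linarith [h1X]) (by nlinarith [h2Y])
    have hw : 0 < w := posroot (p := w) (v := p) (w := v)
      (by linear_combination hprod3) (by linarith [h1X]) (by nlinarith [h2Y])
    refine ⟨p, v⁻¹, hppos, inv_pos.2 hv, ?_, ?_⟩
    · rw [inv_inv]
      have e3 : p⁻¹ * v⁻¹ = w := by
        have h7 : w * (p * v) = 1 := by linear_combination hprod3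
        rw [← mul_inv]
        exact (eq_inv_of_mul_eq_one_left h7).symm
      rw [e3]
      linarith [he1r]
    · rw [inv_inv]
      have e3 : p⁻¹ = v*w := by
        have h7 : (v*w) * p = 1 := by linear_combination hprod3
        exact (eq_inv_of_mul_eq_one_left h7).symm
      have e4 : v⁻¹ = p*w := by
        have h7 : (p*w) * v = 1 := by linear_combination hprod3
        exact (eq_inv_of_mul_eq_one_left h7).symm
      rw [e3, e4]
      linarith [he2r]
  · -- complex pair
    have hDpos : 0 < -D := by linarith
    set s : ℝ := Real.sqrt (-D) with hsdef
    have hspos : 0 < s := Real.sqrt_pos.2 hDpos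
    have hs2 : s^2 = -D := Real.sq_sqrt hDpos.le
    set z : ℂ := Complex.ofReal ((X-p)/2) + Complex.ofReal (s/2) * Complex.I with hzdef
    have hzre : z.re = (X-p)/2 := by simp [hzdef]
    have hzim : z.im = s/2 := by simp [hzdef]
    have him : 0 < z.im := by rw [hzim]; linarith
    have hns : ((X-p)/2)^2 + (s/2)^2 = 1/p := by
      have hD2 : s^2 + ((X-p)^2 - 4/p) = 0 := by rw [hs2]; ring
      linear_combination (1/4) * hD2
    have hnsq2 : Complex.normSq z = 1/p := by
      rw [Complex.normSq_apply, hzre, hzim]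
      linear_combination hns
    have hzz : z * (starRingEnd ℂ) z = Complex.ofReal (1/p) := by
      rw [Complex.mul_conj, hnsq2]
    have hsumz : z + (starRingEnd ℂ) z = Complex.ofReal (X-p) := by
      rw [Complex.add_conj, hzre]
      push_cast
      ring
    have hpc : (p:ℂ) ≠ 0 := Complex.ofReal_ne_zero.mpr hp0ne
    have hprodc : (p:ℂ) * z * ((starRingEnd ℂ) z) = 1 := by
      rw [mul_assoc, hzz]
      push_cast
      field_simp [hpc]
    have he1c : (p:ℂ) + z + (starRingEnd ℂ) z = (X:ℂ) := by
      rw [add_assoc, hsumz]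
      push_cast
      ring
    have he2c : (p:ℂ)*z + (p:ℂ)*((starRingEnd ℂ) z) + z*((starRingEnd ℂ) z) = (Y:ℂ) := by
      have e5 : (p:ℂ)*z + (p:ℂ)*((starRingEnd ℂ) z) + z*((starRingEnd ℂ) z)
          = (p:ℂ)*(z + (starRingEnd ℂ) z) + z*((starRingEnd ℂ) z) := by ring
      rw [e5, hsumz, hzz]
      have hre : p*(X-p) + 1/p = Y := hy2
      push_cast
      exact_mod_cast congrArg Complex.ofReal hre
    set r : ℝ := ‖z‖ with hrdef
    have hrpos : 0 < r := norm_pos_iff.2 (fun h => by simp [h] at him)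
    have hrr : r*r = 1/p := by
      rw [show r*r = r^2 by ring, hrdef, Complex.sq_norm, hnsq2]
    clear_value f M D s z r
    rcases lt_trichotomy r 1 with hr | hr | hr
    · -- r < 1 : use swapped point
      have H' : ∀ l1 l2 : ℕ, 0 ≤ MvPolynomial.aeval ![Y,X] (Q l1 l2) := by
        intro l1 l2
        have h := H l2 l1
        rw [← hQ.2.2.2.2 ((l1:ℤ)) ((l2:ℤ)), aeval_swap] at h
        exact h
      have him' : 0 < ((p:ℂ) * z).im := by
        have : ((p:ℂ) * z).im = p * z.im := by
          simp [Complex.mul_im]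
        rw [this]
        exact mul_pos hppos him
      have habs' : 1 < ‖(p:ℂ) * z‖ := by
        rw [norm_mul, Complex.norm_real, Real.norm_eq_abs, abs_of_pos hppos, ← hrdef]
        have h8 : p*r*r = 1 := by rw [mul_assoc, hrr]; field_simp
        rcases le_or_gt (p*r) 1 with h9 | h9
        · exfalso
          have h10 : p*r*r ≤ 1*r := mul_le_mul_of_nonneg_right h9 hrpos.le
          rw [h8, one_mul] at h10
          linarith
        · exact h9
      have hprod' : ((r*r : ℝ):ℂ) * ((p:ℂ)*z) * ((starRingEnd ℂ) ((p:ℂ)*z)) = 1 := by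
        rw [map_mul, Complex.conj_ofReal]
        have e6 : ((r*r : ℝ):ℂ) * ((p:ℂ)*z) * ((p:ℂ) * (starRingEnd ℂ) z)
            = ((r*r : ℝ):ℂ) * (p:ℂ) * (p:ℂ) * (z * (starRingEnd ℂ) z) := by ring
        rw [e6, hzz]
        have hreal : (r*r) * p * p * (1/p) = 1 := by
          rw [hrr]; field_simp
        push_cast
        exact_mod_cast congrArg Complex.ofReal hreal
      have he1' : ((r*r : ℝ):ℂ) + ((p:ℂ)*z) + ((starRingEnd ℂ) ((p:ℂ)*z)) = (Y:ℂ) := by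
        rw [map_mul, Complex.conj_ofReal]
        have e6 : ((r*r : ℝ):ℂ) + ((p:ℂ)*z) + ((p:ℂ) * (starRingEnd ℂ) z)
            = ((r*r : ℝ):ℂ) + (p:ℂ)*(z + (starRingEnd ℂ) z) := by ring
        rw [e6, hsumz]
        have hreal : (r*r) + p*(X-p) = Y := by
          rw [hrr]; linarith [hy2]
        push_cast
        exact_mod_cast congrArg Complex.ofReal hreal
      have he2' : ((r*r : ℝ):ℂ)*((p:ℂ)*z) + ((r*r : ℝ):ℂ)*((starRingEnd ℂ) ((p:ℂ)*z))
          + ((p:ℂ)*z)*((starRingEnd ℂ) ((p:ℂ)*z)) = (X:ℂ) := by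
        rw [map_mul, Complex.conj_ofReal]
        have e6 : ((r*r : ℝ):ℂ)*((p:ℂ)*z) + ((r*r : ℝ):ℂ)*((p:ℂ)*(starRingEnd ℂ) z)
            + ((p:ℂ)*z)*((p:ℂ)*(starRingEnd ℂ) z)
            = ((r*r : ℝ):ℂ)*(p:ℂ)*(z + (starRingEnd ℂ) z)
              + (p:ℂ)*(p:ℂ)*(z * (starRingEnd ℂ) z) := by ring
        rw [e6, hsumz, hzz]
        have hreal : (r*r)*p*(X-p) + p*p*(1/p) = X := by
          rw [hrr]; field_simp; ring
        push_cast
        exact_mod_cast congrArg Complex.ofReal hreal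
      exact (IIB hQ Y X H' (r*r) ((p:ℂ)*z) him' habs' hprod' he1' he2').elim
    · -- r = 1
      have hp1 : p = 1 := by
        have h1 : (1:ℝ)*1 = 1/p := by rw [← hr] at hrr ⊢; exact hrr
        field_simp at h1
        linarith
      rw [hp1] at hprodc he1c he2c
      push_cast at hprodc he1c he2c
      exact (IIC hQ X Y H z him (by rw [← hrdef]; exact hr) hprodc he1c he2c).elim
    · exact (IIB hQ X Y H p z him (by rw [← hrdef]; exact hr) hprodc he1c he2c).elim
end PartB

theorem stmt_12 (Q : ℤ → ℤ → Rxy) (hQ : IsQSU3 Q) :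
    ({q : ℝ × ℝ | ∃ a b : ℝ, 0 < a ∧ 0 < b ∧
        q = (a + b⁻¹ + a⁻¹ * b, a⁻¹ + b + a * b⁻¹)} =
      {q : ℝ × ℝ | ∀ l1 l2 : ℕ, 0 ≤ aeval ![q.1, q.2] (Q (l1 : ℤ) (l2 : ℤ))}) ∧
    ({q : ℝ × ℝ | ∀ l1 l2 : ℕ, 0 ≤ aeval ![q.1, q.2] (Q (l1 : ℤ) (l2 : ℤ))} =
      {q : ℝ × ℝ | ∀ l1 l2 : ℕ, 0 < aeval ![q.1, q.2] (Q (l1 : ℤ) (l2 : ℤ))}) := by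
  constructor
  · ext q
    simp only [Set.mem_setOf_eq]
    constructor
    · rintro ⟨a, b, ha, hb, rfl⟩ l1 l2
      exact partA hQ a b ha hb l1 l2
    · intro h
      obtain ⟨a, b, ha, hb, h1, h2⟩ := partB hQ q.1 q.2 h
      exact ⟨a, b, ha, hb, Prod.ext_iff.mpr ⟨by simpa using h1, by simpa using h2⟩⟩
  · ext q
    simp only [Set.mem_setOf_eq]
    constructor
    · intro h l1 l2
      exact pos_of_nonneg hQ q.1 q.2 h l1 l2
    · intro h l1 l2
      exact (h l1 l2).le
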